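/- Let μ be a probability measure on ℝ^d, let s ≠ 0 and σ > 0 be reals, and let w : ℝ^d → [0,∞) be a bounded measurable function with ∫ w dμ > 0. Define g₁(x) = ∫ exp(−‖x − s·x₀‖²/(2 s² σ²)) dμ(x₀), g_w(x) = ∫ w(x₀) · exp(−‖x − s·x₀‖²/(2 s² σ²)) dμ(x₀), m₁(x) = (∫ x₀ · exp(−‖x − s·x₀‖²/(2 s² σ²)) dμ(x₀)) / g₁(x), and m_w(x) = (∫ x₀ · w(x₀) · exp(−‖x − s·x₀‖²/(2 s² σ²)) dμ(x₀)) / g_w(x). Then for every x ∈ ℝ^d, m_w(x) = m₁(x) + s σ² · ∇_x log( g_w(x) / g₁(x) ). (The conditional posterior mean equals the posterior mean drifted by the scaled likelihood score, since g_w/g₁ is proportional in x to p_t(y|x_t).) -/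

import Mathlib

set_option maxHeartbeats 1000000
set_option synthInstance.maxHeartbeats 400000
open MeasureTheory Real

variable {F : Type*} [NormedAddCommGroup F] [InnerProductSpace ℝ F]

lemma sqrt_bound (a r : ℝ) (ha : 0 < a) :
    Real.exp (-r ^ 2 / (2 * a)) * r ≤ Real.sqrt (2 * a) := by
  have h2a : (0:ℝ) < 2 * a := by linarith
  set q := Real.sqrt (2 * a) with hq
  have hq0 : 0 < q := Real.sqrt_pos.mpr h2a
  have hq2 : q ^ 2 = 2 * a := Real.sq_sqrt h2a.le
  have hexp : 1 + r ^ 2 / (2 * a) ≤ Real.exp (r ^ 2 / (2 * a)) :=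
    Real.add_one_le_exp _ |>.trans_eq' (by ring_nf)
  have hrq : r ≤ q * Real.exp (r ^ 2 / (2 * a)) := by
    have h1 : q * (1 + r ^ 2 / (2 * a)) = q + r ^ 2 / q := by
      rw [← hq2]; field_simp
    have h2 : r * q ≤ q ^ 2 + r ^ 2 := by nlinarith [sq_nonneg (r - q)]
    have h3 : r ≤ q + r ^ 2 / q := by
      have h4 : q + r ^ 2 / q = (q ^ 2 + r ^ 2) / q := by field_simp
      rw [h4, le_div_iff₀ hq0]; linarith
    have h5 := mul_le_mul_of_nonneg_left hexp hq0.le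
    linarith [h1 ▸ h5]
  rw [neg_div, Real.exp_neg, inv_mul_le_iff₀ (Real.exp_pos _)]
  linarith [hrq, mul_comm q (Real.exp (r ^ 2 / (2 * a)))]

lemma kernel_hasFDerivAt (a : ℝ) (ha : 0 < a) (c x : F) :
    HasFDerivAt (fun y : F => Real.exp (-‖y - c‖ ^ 2 / (2 * a)))
      ((Real.exp (-‖x - c‖ ^ 2 / (2 * a)) * (-a⁻¹)) • (innerSL ℝ (x - c))) x := by
  have h1 : HasFDerivAt (fun y : F => y - c) (ContinuousLinearMap.id ℝ F) x :=
    (hasFDerivAt_id x).sub_const c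
  have h2 := h1.norm_sq
  have h3 : HasFDerivAt (fun y : F => -‖y - c‖ ^ 2 / (2 * a))
      ((-(2 * a)⁻¹) • (2 • (innerSL ℝ (x - c)).comp (ContinuousLinearMap.id ℝ F))) x := by
    have := h2.const_mul (-(2 * a)⁻¹)
    refine this.congr_of_eventuallyEq (Filter.Eventually.of_forall fun y => ?_)
    ring
  have h4 := h3.exp
  convert h4 using 1
  ext y
  simp only [ContinuousLinearMap.smul_apply, ContinuousLinearMap.coe_smul', Pi.smul_apply,
    ContinuousLinearMap.coe_comp', Function.comp_apply, ContinuousLinearMap.coe_id', id_eq,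
    smul_eq_mul]
  rw [two_smul]
  have h2a : (2 * a) ≠ 0 := by positivity
  field_simp
  ring

lemma main_aux {d : ℕ} (μ : Measure (EuclideanSpace ℝ (Fin d))) [IsProbabilityMeasure μ]
    (s σ : ℝ) (hs : s ≠ 0) (hσ : 0 < σ)
    (w : EuclideanSpace ℝ (Fin d) → ℝ) (hw_meas : Measurable w)
    (hw_nonneg : ∀ x, 0 ≤ w x) (C : ℝ) (hC : ∀ x, w x ≤ C)
    (hw_supp : 0 < μ (Function.support w)) (x : EuclideanSpace ℝ (Fin d)) :
    (0 < ∫ v, w v * Real.exp (-‖x - s • v‖ ^ 2 / (2 * s ^ 2 * σ ^ 2)) ∂μ) ∧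
    HasGradientAt
      (fun y => ∫ v, w v * Real.exp (-‖y - s • v‖ ^ 2 / (2 * s ^ 2 * σ ^ 2)) ∂μ)
      ((-(s ^ 2 * σ ^ 2)⁻¹) •
        ((∫ v, w v * Real.exp (-‖x - s • v‖ ^ 2 / (2 * s ^ 2 * σ ^ 2)) ∂μ) • x -
          s • ∫ v, (w v * Real.exp (-‖x - s • v‖ ^ 2 / (2 * s ^ 2 * σ ^ 2))) • v ∂μ)) x := by
  have ha : (0:ℝ) < s ^ 2 * σ ^ 2 := by positivity
  set a : ℝ := s ^ 2 * σ ^ 2 with ha_def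
  have h2a : (2:ℝ) * s ^ 2 * σ ^ 2 = 2 * a := by rw [ha_def]; ring
  simp only [h2a]
  set k : EuclideanSpace ℝ (Fin d) → EuclideanSpace ℝ (Fin d) → ℝ := fun y v => Real.exp (-‖y - s • v‖ ^ 2 / (2 * a)) with hk_def
  have hk_pos : ∀ (y v : EuclideanSpace ℝ (Fin d)), 0 < k y v := fun y v => Real.exp_pos _
  have hk_le_one : ∀ (y v : EuclideanSpace ℝ (Fin d)), k y v ≤ 1 := by
    intro y v
    apply Real.exp_le_one_iff.mpr
    have : (0:ℝ) < 2 * a := by positivity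
    rw [neg_div]
    exact neg_nonpos.mpr (by positivity)
  have hk_cont : ∀ y, Continuous (fun v => k y v) := by
    intro y
    apply Real.continuous_exp.comp
    fun_prop
  have hC0 : 0 ≤ C := (hw_nonneg 0).trans (hC 0)
  have hwk_meas : ∀ y, AEStronglyMeasurable (fun v => w v * k y v) μ :=
    fun y => (hw_meas.mul (hk_cont y).measurable).aestronglyMeasurable
  have hwk_int : ∀ y, Integrable (fun v => w v * k y v) μ := by
    intro y
    refine (integrable_const C).mono' (hwk_meas y) (ae_of_all _ fun v => ?_)
    rw [Real.norm_eq_abs, abs_mul, abs_of_nonneg (hw_nonneg v), abs_of_nonneg (hk_pos y v).le]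
    calc w v * k y v ≤ C * 1 :=
          mul_le_mul (hC v) (hk_le_one y v) (hk_pos y v).le hC0
      _ = C := mul_one C
  constructor
  · rw [integral_pos_iff_support_of_nonneg
      (fun v => mul_nonneg (hw_nonneg v) (hk_pos x v).le) (hwk_int x)]
    have hsupp : (Function.support fun v => w v * k x v) = Function.support w := by
      ext v
      simp only [Function.mem_support, mul_ne_zero_iff]
      exact ⟨fun h => h.1, fun h => ⟨h, (hk_pos x v).ne'⟩⟩
    rw [hsupp]; exact hw_supp
  -- gradient part
  · have key : ∀ (y v : EuclideanSpace ℝ (Fin d)), HasFDerivAt (fun y' => w v * k y' v)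
        ((w v * (k y v * -a⁻¹)) • innerSL ℝ (y - s • v)) y := by
      intro y v
      have := (kernel_hasFDerivAt a ha (s • v) y).const_mul (w v)
      simpa [smul_smul, mul_assoc] using this
    set M : ℝ := C * a⁻¹ * Real.sqrt (2 * a) with hM_def
    have hbd : ∀ (y v : EuclideanSpace ℝ (Fin d)), w v * (k y v * a⁻¹) * ‖y - s • v‖ ≤ M := by
      intro y v
      have h1 : k y v * ‖y - s • v‖ ≤ Real.sqrt (2 * a) := sqrt_bound a _ ha
      have : w v * (k y v * a⁻¹) * ‖y - s • v‖ = w v * a⁻¹ * (k y v * ‖y - s • v‖) := by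
        ring
      rw [this, hM_def]
      have h2 : w v * a⁻¹ ≤ C * a⁻¹ :=
        mul_le_mul_of_nonneg_right (hC v) (by positivity)
      have h3 : 0 ≤ k y v * ‖y - s • v‖ := mul_nonneg (hk_pos y v).le (norm_nonneg _)
      calc w v * a⁻¹ * (k y v * ‖y - s • v‖) ≤ (C * a⁻¹) * Real.sqrt (2 * a) := by
            apply mul_le_mul h2 h1 h3 (by positivity)
        _ = C * a⁻¹ * Real.sqrt (2 * a) := rfl
    have hF'norm : ∀ (y v : EuclideanSpace ℝ (Fin d)),
        ‖(w v * (k y v * -a⁻¹)) • innerSL ℝ (y - s • v)‖ ≤ M := by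
      intro y v
      have h0 := norm_smul (w v * (k y v * -a⁻¹)) (innerSL ℝ (y - s • v))
      rw [h0, innerSL_apply_norm, Real.norm_eq_abs, abs_mul, abs_mul, abs_neg, abs_inv,
        abs_of_nonneg (hw_nonneg v), abs_of_nonneg (hk_pos y v).le, abs_of_nonneg ha.le]
      exact hbd y v
    have hinnercont : Continuous fun v : EuclideanSpace ℝ (Fin d) => innerSL ℝ (x - s • v) :=
      (innerSL ℝ (E := EuclideanSpace ℝ (Fin d))).continuous.comp (by fun_prop)
    have hF'_meas : AEStronglyMeasurable
        (fun v => (w v * (k x v * -a⁻¹)) • innerSL ℝ (x - s • v)) μ :=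
      ((hw_meas.mul ((hk_cont x).mul continuous_const).measurable).aestronglyMeasurable).smul
        hinnercont.aestronglyMeasurable
    have HFD : HasFDerivAt (fun y => ∫ v, w v * k y v ∂μ)
        (∫ v, (w v * (k x v * -a⁻¹)) • innerSL ℝ (x - s • v) ∂μ) x := by
      apply hasFDerivAt_integral_of_dominated_of_fderiv_le (Metric.ball_mem_nhds x one_pos)
        (Filter.Eventually.of_forall fun y => hwk_meas y) (hwk_int x) hF'_meas
        (ae_of_all _ fun v y _ => hF'norm y v) (integrable_const M)
        (ae_of_all _ fun v y _ => key y v)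
    -- convert CLM integral to vector integral
    set Gvec : EuclideanSpace ℝ (Fin d) → EuclideanSpace ℝ (Fin d) := fun v => (w v * (k x v * -a⁻¹)) • (x - s • v) with hGvec_def
    have hGvec_meas : AEStronglyMeasurable Gvec μ :=
      ((hw_meas.mul ((hk_cont x).mul continuous_const).measurable).aestronglyMeasurable).smul
        (Continuous.aestronglyMeasurable (by fun_prop))
    have hGvec_int : Integrable Gvec μ := by
      refine (integrable_const M).mono' hGvec_meas (ae_of_all _ fun v => ?_)
      rw [hGvec_def]
      simp only [norm_smul, Real.norm_eq_abs]
      rw [abs_mul, abs_mul, abs_neg, abs_inv, abs_of_nonneg (hw_nonneg v),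
        abs_of_nonneg (hk_pos x v).le, abs_of_nonneg ha.le]
      exact hbd x v
    have hcomm : (∫ v, (w v * (k x v * -a⁻¹)) • innerSL ℝ (x - s • v) ∂μ)
        = innerSL ℝ (∫ v, Gvec v ∂μ) := by
      rw [← ContinuousLinearMap.integral_comp_comm (innerSL ℝ) hGvec_int]
      congr 1
      funext v
      rw [hGvec_def]
      exact (map_smul (innerSL ℝ) _ _).symm
    -- split the vector integral
    have hint_x : Integrable (fun v => (w v * k x v) • x) μ := (hwk_int x).smul_const x
    have hint_v : Integrable (fun v => (w v * k x v) • v) μ := by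
      refine (integrable_const (C * ((Real.sqrt (2 * a) + ‖x‖) / |s|))).mono'
        (((hw_meas.mul (hk_cont x).measurable).aestronglyMeasurable).smul
          (Continuous.aestronglyMeasurable (by fun_prop))) (ae_of_all _ fun v => ?_)
      rw [norm_smul, Real.norm_eq_abs, abs_mul, abs_of_nonneg (hw_nonneg v),
        abs_of_nonneg (hk_pos x v).le]
      have hskv : k x v * ‖v‖ ≤ (Real.sqrt (2 * a) + ‖x‖) / |s| := by
        have hnv : ‖v‖ = ‖s • v‖ / |s| := by
          rw [norm_smul, Real.norm_eq_abs]
          field_simp [abs_ne_zero.mpr hs]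
        have h5 : ‖s • v‖ ≤ ‖x - s • v‖ + ‖x‖ := by
          calc ‖s • v‖ = ‖s • v - x + x‖ := by rw [sub_add_cancel]
            _ ≤ ‖s • v - x‖ + ‖x‖ := norm_add_le _ _
            _ = ‖x - s • v‖ + ‖x‖ := by rw [norm_sub_rev]
        have hb' : k x v * ‖x - s • v‖ ≤ Real.sqrt (2 * a) := sqrt_bound a _ ha
        have h6 : k x v * ‖s • v‖ ≤ Real.sqrt (2 * a) + ‖x‖ := by
          nlinarith [mul_le_mul_of_nonneg_left h5 (hk_pos x v).le,
            mul_le_mul_of_nonneg_right (hk_le_one x v) (norm_nonneg x), (hk_pos x v).le]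
        rw [hnv, ← mul_div_assoc]
        exact (div_le_div_iff_of_pos_right (abs_pos.mpr hs)).mpr h6
      calc w v * k x v * ‖v‖ = w v * (k x v * ‖v‖) := by ring
        _ ≤ C * ((Real.sqrt (2 * a) + ‖x‖) / |s|) :=
            mul_le_mul (hC v) hskv (by positivity) hC0
    have hsplit : ∫ v, Gvec v ∂μ
        = (-a⁻¹) • ((∫ v, w v * k x v ∂μ) • x - s • ∫ v, (w v * k x v) • v ∂μ) := by
      have h6 : Gvec = fun v => (-a⁻¹) • ((w v * k x v) • x - s • ((w v * k x v) • v)) := by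
        funext v
        rw [hGvec_def]
        match_scalars <;> ring
      have hint_sv : Integrable (fun v => s • ((w v * k x v) • v)) μ := hint_v.smul s
      rw [h6, integral_smul]
      congr 1
      rw [integral_sub hint_x hint_sv, integral_smul, integral_smul_const]
    rw [hasGradientAt_iff_hasFDerivAt]
    have htd : ∀ u : EuclideanSpace ℝ (Fin d),
        (InnerProductSpace.toDual ℝ (EuclideanSpace ℝ (Fin d))) u = innerSL ℝ u := by
      intro u; ext z; simp [InnerProductSpace.toDual_apply_apply]
    rw [htd, ← hsplit, ← hcomm]
    exact HFD
/-- **Conditional posterior mean = posterior mean + scaled likelihood score.**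
`m_w(x) = m₁(x) + s σ² ∇ₓ log (g_w(x) / g₁(x))`. -/
theorem conditional_posterior_mean_drift {d : ℕ} (μ : Measure (EuclideanSpace ℝ (Fin d)))
    [IsProbabilityMeasure μ] (s σ : ℝ) (hs : s ≠ 0) (hσ : 0 < σ)
    (w : EuclideanSpace ℝ (Fin d) → ℝ) (hw_meas : Measurable w)
    (hw_nonneg : ∀ x, 0 ≤ w x) (hw_bdd : ∃ C, ∀ x, w x ≤ C)
    (hw_pos : 0 < ∫ x₀, w x₀ ∂μ)
    (g₁ : EuclideanSpace ℝ (Fin d) → ℝ)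
    (hg₁ : ∀ x, g₁ x = ∫ x₀, Real.exp (-‖x - s • x₀‖ ^ 2 / (2 * s ^ 2 * σ ^ 2)) ∂μ)
    (gw : EuclideanSpace ℝ (Fin d) → ℝ)
    (hgw : ∀ x, gw x = ∫ x₀, w x₀ * Real.exp (-‖x - s • x₀‖ ^ 2 / (2 * s ^ 2 * σ ^ 2)) ∂μ)
    (m₁ : EuclideanSpace ℝ (Fin d) → EuclideanSpace ℝ (Fin d))
    (hm₁ : ∀ x, m₁ x = (g₁ x)⁻¹ •
      ∫ x₀, Real.exp (-‖x - s • x₀‖ ^ 2 / (2 * s ^ 2 * σ ^ 2)) • x₀ ∂μ)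
    (mw : EuclideanSpace ℝ (Fin d) → EuclideanSpace ℝ (Fin d))
    (hmw : ∀ x, mw x = (gw x)⁻¹ •
      ∫ x₀, (w x₀ * Real.exp (-‖x - s • x₀‖ ^ 2 / (2 * s ^ 2 * σ ^ 2))) • x₀ ∂μ) :
    ∀ x, mw x = m₁ x + (s * σ ^ 2) • gradient (fun y => Real.log (gw y / g₁ y)) x := by
  intro x
  obtain ⟨C, hC⟩ := hw_bdd
  have hC0 : 0 ≤ C := (hw_nonneg 0).trans (hC 0)
  -- integrability of w and positivity of its support
  have hw_int : Integrable w μ := by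
    refine (integrable_const C).mono' hw_meas.aestronglyMeasurable (ae_of_all _ fun v => ?_)
    rw [Real.norm_eq_abs, abs_of_nonneg (hw_nonneg v)]; exact hC v
  have hw_supp : 0 < μ (Function.support w) :=
    (integral_pos_iff_support_of_nonneg hw_nonneg hw_int).1 hw_pos
  have hone_supp : 0 < μ (Function.support fun _ : EuclideanSpace ℝ (Fin d) => (1:ℝ)) := by
    rw [Function.support_const one_ne_zero]
    simp
  -- the two instances of the main auxiliary lemma
  have Hw := fun y => main_aux μ s σ hs hσ w hw_meas hw_nonneg C hC hw_supp y
  have H1 := fun y => main_aux μ s σ hs hσ (fun _ => 1) measurable_const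
    (fun _ => zero_le_one) 1 (fun _ => le_rfl) hone_supp y
  simp only [one_mul] at H1
  -- positivity of gw and g₁
  have hgwpos : ∀ y, 0 < gw y := fun y => by rw [hgw]; exact (Hw y).1
  have hg1pos : ∀ y, 0 < g₁ y := fun y => by rw [hg₁]; exact (H1 y).1
  -- identify the integral functions with gw and g₁
  have hgw_fun : (fun y => ∫ v, w v *
      Real.exp (-‖y - s • v‖ ^ 2 / (2 * s ^ 2 * σ ^ 2)) ∂μ) = gw :=
    funext fun y => (hgw y).symm
  have hg1_fun : (fun y => ∫ v,
      Real.exp (-‖y - s • v‖ ^ 2 / (2 * s ^ 2 * σ ^ 2)) ∂μ) = g₁ :=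
    funext fun y => (hg₁ y).symm
  have HwG := (Hw x).2
  have H1G := (H1 x).2
  rw [hgw_fun] at HwG
  rw [hg1_fun] at H1G
  set a : ℝ := s ^ 2 * σ ^ 2 with ha_def
  set Bw : EuclideanSpace ℝ (Fin d) :=
    ∫ v, (w v * Real.exp (-‖x - s • v‖ ^ 2 / (2 * s ^ 2 * σ ^ 2))) • v ∂μ with hBw_def
  set B1 : EuclideanSpace ℝ (Fin d) :=
    ∫ v, Real.exp (-‖x - s • v‖ ^ 2 / (2 * s ^ 2 * σ ^ 2)) • v ∂μ with hB1_def
  rw [← hgw x] at HwG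
  rw [← hg₁ x] at H1G
  -- gradients of the logarithms
  have Hlogw : HasGradientAt (fun y => Real.log (gw y))
      ((gw x)⁻¹ • ((-a⁻¹) • (gw x • x - s • Bw))) x := by
    rw [hasGradientAt_iff_hasFDerivAt] at HwG ⊢
    have := (Real.hasDerivAt_log (hgwpos x).ne').comp_hasFDerivAt x HwG
    simpa [Function.comp_def, _root_.map_smul] using this
  have Hlog1 : HasGradientAt (fun y => Real.log (g₁ y))
      ((g₁ x)⁻¹ • ((-a⁻¹) • (g₁ x • x - s • B1))) x := by
    rw [hasGradientAt_iff_hasFDerivAt] at H1G ⊢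
    have := (Real.hasDerivAt_log (hg1pos x).ne').comp_hasFDerivAt x H1G
    simpa [Function.comp_def, _root_.map_smul] using this
  have Hdiff : HasGradientAt (fun y => Real.log (gw y) - Real.log (g₁ y))
      ((gw x)⁻¹ • ((-a⁻¹) • (gw x • x - s • Bw)) -
        (g₁ x)⁻¹ • ((-a⁻¹) • (g₁ x • x - s • B1))) x := by
    rw [hasGradientAt_iff_hasFDerivAt] at Hlogw Hlog1 ⊢
    have := Hlogw.sub Hlog1
    simpa [map_sub, Pi.sub_def] using this
  have hlogeq : (fun y => Real.log (gw y / g₁ y))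
      = fun y => Real.log (gw y) - Real.log (g₁ y) :=
    funext fun y => Real.log_div (hgwpos y).ne' (hg1pos y).ne'
  rw [hlogeq, Hdiff.gradient]
  -- simplify the two gradient terms
  have e1 : (gw x)⁻¹ • ((-a⁻¹) • (gw x • x - s • Bw)) = (-a⁻¹) • (x - s • mw x) := by
    rw [hmw x, smul_comm ((gw x)⁻¹) (-a⁻¹), smul_sub, inv_smul_smul₀ (hgwpos x).ne',
      smul_comm ((gw x)⁻¹) s]
  have e2 : (g₁ x)⁻¹ • ((-a⁻¹) • (g₁ x • x - s • B1)) = (-a⁻¹) • (x - s • m₁ x) := by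
    rw [hm₁ x, smul_comm ((g₁ x)⁻¹) (-a⁻¹), smul_sub, inv_smul_smul₀ (hg1pos x).ne',
      smul_comm ((g₁ x)⁻¹) s]
  rw [e1, e2, ha_def]
  match_scalars <;> field_simp <;> ring
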